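/- Fix t ∈ ℝ and y ∈ ℝ^q. Let v be a random vector in ℝ^q with independent and identically distributed components having mean 0 and variance 2, and suppose E[|yᵀv|³] < ∞. Define g(θ) = E[π(t + √θ · yᵀv)] for θ ≥ 0. Then g has a right derivative at θ = 0 equal to π(t)(1−π(t))(1−2π(t)) · yᵀy; that is, lim_{θ→0⁺} (g(θ) − π(t))/θ = π(t)(1−π(t))(1−2π(t)) · yᵀy. -/

import Mathlib

open Real

noncomputable def Lg (s : ℝ) : ℝ := Real.exp s / (1 + Real.exp s)
noncomputable def Lg1 (s : ℝ) : ℝ := Lg s * (1 - Lg s)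
noncomputable def Lg2 (s : ℝ) : ℝ := Lg1 s * (1 - 2 * Lg s)

lemma one_add_exp_pos (s : ℝ) : 0 < 1 + Real.exp s := by positivity

lemma Lg_pos (s : ℝ) : 0 < Lg s := div_pos (Real.exp_pos s) (one_add_exp_pos s)

lemma Lg_lt_one (s : ℝ) : Lg s < 1 := by
  rw [Lg, div_lt_one (one_add_exp_pos s)]; linarith

lemma hasDerivAt_Lg (s : ℝ) : HasDerivAt Lg (Lg1 s) s := by
  have h := (Real.hasDerivAt_exp s).div ((hasDerivAt_const s (1:ℝ)).add (Real.hasDerivAt_exp s))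
    (ne_of_gt (one_add_exp_pos s))
  refine h.congr_deriv ?_; symm; simp only [Pi.add_apply, Pi.sub_apply, Pi.mul_apply]
  have := (one_add_exp_pos s).ne'
  rw [Lg1, Lg]
  field_simp
  ring

lemma hasDerivAt_Lg1 (s : ℝ) : HasDerivAt Lg1 (Lg2 s) s := by
  have h := (hasDerivAt_Lg s).mul ((hasDerivAt_const s (1:ℝ)).sub (hasDerivAt_Lg s))
  refine h.congr_deriv ?_; symm; simp only [Pi.add_apply, Pi.sub_apply, Pi.mul_apply]
  rw [Lg2, Lg1]; ring

lemma hasDerivAt_Lg2 (s : ℝ) :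
    HasDerivAt Lg2 (Lg2 s * (1 - 2 * Lg s) - 2 * Lg1 s * Lg1 s) s := by
  have h := (hasDerivAt_Lg1 s).mul ((hasDerivAt_const s (1:ℝ)).sub
    ((hasDerivAt_const s (2:ℝ)).mul (hasDerivAt_Lg s)))
  refine h.congr_deriv ?_; symm; simp only [Pi.add_apply, Pi.sub_apply, Pi.mul_apply]
  rw [Lg2, Lg1]; ring

lemma Lg3_bound (s : ℝ) : |Lg2 s * (1 - 2 * Lg s) - 2 * Lg1 s * Lg1 s| ≤ 1 := by
  have h1 := Lg_pos s
  have h2 := Lg_lt_one s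
  rw [Lg2, Lg1, abs_le]
  have hp0 : 0 ≤ Lg s * (1 - Lg s) := by nlinarith
  have hp4 : Lg s * (1 - Lg s) ≤ 1 / 4 := by nlinarith [sq_nonneg (1 - 2 * Lg s)]
  constructor
  · nlinarith [sq_nonneg (1 - 2 * Lg s), mul_nonneg hp0 (sq_nonneg (1 - 2 * Lg s)),
      mul_self_nonneg (Lg s * (1 - Lg s)), mul_le_mul hp4 hp4 hp0 (by norm_num : (0:ℝ) ≤ 1/4)]
  · nlinarith [sq_nonneg (1 - 2 * Lg s), mul_nonneg hp0 (sq_nonneg (1 - 2 * Lg s)),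
      mul_le_mul hp4 hp4 hp0 (by norm_num : (0:ℝ) ≤ 1/4),
      mul_le_of_le_one_right hp0 (by nlinarith [sq_nonneg (1 - 2 * Lg s)] : (1 - 2 * Lg s) * (1 - 2 * Lg s) ≤ 1)]

lemma Lg2_lipschitz (a b : ℝ) : |Lg2 a - Lg2 b| ≤ |a - b| := by
  have := Convex.norm_image_sub_le_of_norm_hasDerivWithin_le
    (f := Lg2) (f' := fun s => Lg2 s * (1 - 2 * Lg s) - 2 * Lg1 s * Lg1 s) (C := 1)
    (fun x _ => (hasDerivAt_Lg2 x).hasDerivWithinAt)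
    (fun x _ => by simpa [Real.norm_eq_abs] using Lg3_bound x)
    convex_univ (Set.mem_univ b) (Set.mem_univ a)
  simpa [Real.norm_eq_abs] using this

lemma taylor2_Lg (t s : ℝ) :
    |Lg (t + s) - Lg t - Lg1 t * s - Lg2 t / 2 * s ^ 2| ≤ |s| ^ 3 := by
  set h : ℝ → ℝ := fun u => Lg (t + u) - Lg t - Lg1 t * u - Lg2 t / 2 * u ^ 2 with hh
  set h1 : ℝ → ℝ := fun u => Lg1 (t + u) - Lg1 t - Lg2 t * u with hh1
  have dh : ∀ u, HasDerivAt h (h1 u) u := by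
    intro u
    have c1 : HasDerivAt (fun u : ℝ => Lg (t + u)) (Lg1 (t + u)) u := by
      exact ((hasDerivAt_Lg (t + u)).comp u ((hasDerivAt_id u).const_add t)).congr_deriv (mul_one _)
    have := ((c1.sub_const (Lg t)).sub ((hasDerivAt_id u).const_mul (Lg1 t))).sub
      (((hasDerivAt_pow 2 u)).const_mul (Lg2 t / 2))
    refine this.congr_deriv ?_; symm
    simp [hh1]; ring
  have dh1 : ∀ u, HasDerivAt h1 (Lg2 (t + u) - Lg2 t) u := by
    intro u
    have c1 : HasDerivAt (fun u : ℝ => Lg1 (t + u)) (Lg2 (t + u)) u := by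
      exact ((hasDerivAt_Lg1 (t + u)).comp u ((hasDerivAt_id u).const_add t)).congr_deriv (mul_one _)
    have := (c1.sub_const (Lg1 t)).sub ((hasDerivAt_id u).const_mul (Lg2 t))
    refine this.congr_deriv ?_; symm
    ring
  have memIcc : ∀ u ∈ Set.uIcc 0 s, |u| ≤ |s| := by
    intro u hu
    rcases Set.mem_uIcc.mp hu with ⟨h0, h1⟩ | ⟨h0, h1⟩
    · rw [abs_of_nonneg h0, abs_of_nonneg (h0.trans h1)]; exact h1
    · rw [abs_of_nonpos h1, abs_of_nonpos (h0.trans h1)]; linarith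
  have bh1 : ∀ u ∈ Set.uIcc 0 s, |h1 u| ≤ |s| ^ 2 := by
    intro u hu
    have := Convex.norm_image_sub_le_of_norm_hasDerivWithin_le
      (f := h1) (f' := fun w => Lg2 (t + w) - Lg2 t) (C := |s|)
      (fun x _ => (dh1 x).hasDerivWithinAt)
      (fun x hx => by
        rw [Real.norm_eq_abs]
        calc |Lg2 (t + x) - Lg2 t| ≤ |t + x - t| := Lg2_lipschitz _ _
          _ = |x| := by ring_nf
          _ ≤ |s| := memIcc x hx)
      (convex_uIcc 0 s) (Set.left_mem_uIcc) hu
    have h10 : h1 0 = 0 := by simp [hh1]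
    rw [h10, sub_zero, Real.norm_eq_abs, Real.norm_eq_abs, sub_zero] at this
    calc |h1 u| ≤ |s| * |u| := this
      _ ≤ |s| * |s| := mul_le_mul_of_nonneg_left (memIcc u hu) (abs_nonneg s)
      _ = |s| ^ 2 := (sq |s|).symm
  have bh : |h s| ≤ |s| ^ 3 := by
    have := Convex.norm_image_sub_le_of_norm_hasDerivWithin_le
      (f := h) (f' := h1) (C := |s| ^ 2)
      (fun x _ => (dh x).hasDerivWithinAt)
      (fun x hx => by rw [Real.norm_eq_abs]; exact bh1 x hx)
      (convex_uIcc 0 s) Set.left_mem_uIcc Set.right_mem_uIcc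
    have h0 : h 0 = 0 := by simp [hh]
    rw [h0, sub_zero, Real.norm_eq_abs, Real.norm_eq_abs, sub_zero] at this
    calc |h s| ≤ |s| ^ 2 * |s| := this
      _ = |s| ^ 3 := by ring
  exact bh

open MeasureTheory ProbabilityTheory BigOperators Filter Topology

lemma continuous_Lg : Continuous Lg :=
  Real.continuous_exp.div (continuous_const.add Real.continuous_exp)
    (fun s => (one_add_exp_pos s).ne')

theorem right_derivative_marginal_logistic
    (pi : ℝ → ℝ) (hpi : ∀ s, pi s = Real.exp s / (1 + Real.exp s))
    {Ω : Type*} [MeasurableSpace Ω] (μ : Measure Ω) [IsProbabilityMeasure μ]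
    {q : ℕ} (v : Fin q → Ω → ℝ)
    (hmeas : ∀ j, Measurable (v j))
    (hindep : iIndepFun v μ)
    (hident : ∀ i j, μ.map (v i) = μ.map (v j))
    (hmean : ∀ j, ∫ ω, v j ω ∂μ = 0)
    (hvar : ∀ j, ∫ ω, (v j ω) ^ 2 ∂μ = 2)
    (t : ℝ) (y : Fin q → ℝ)
    (hthird : Integrable (fun ω => |∑ j, y j * v j ω| ^ 3) μ)
    (g : ℝ → ℝ)
    (hg : ∀ θ, g θ = ∫ ω, pi (t + Real.sqrt θ * ∑ j, y j * v j ω) ∂μ) :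
    Tendsto (fun θ => (g θ - pi t) / θ) (nhdsWithin 0 (Set.Ioi 0))
      (nhds (pi t * (1 - pi t) * (1 - 2 * pi t) * ∑ j, (y j) ^ 2)) := by
  have hpiL : pi = Lg := funext fun s => hpi s
  subst hpiL
  set S : Ω → ℝ := fun ω => ∑ j, y j * v j ω with hS
  have hSmeas : Measurable S := Finset.measurable_sum _ fun j _ => (hmeas j).const_mul (y j)
  -- integrability facts
  have hIsq : ∀ j, Integrable (fun ω => (v j ω) ^ 2) μ := by
    intro j
    by_contra hn
    have := hvar j
    rw [integral_undef hn] at this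
    exact two_ne_zero this.symm
  have hIv : ∀ j, Integrable (v j) μ := by
    intro j
    refine ((integrable_const (1:ℝ)).add (hIsq j)).mono' (hmeas j).aestronglyMeasurable ?_
    filter_upwards with ω
    simp only [Pi.add_apply]
    rw [Real.norm_eq_abs]
    nlinarith [sq_nonneg (|v j ω| - 1), sq_abs (v j ω), abs_nonneg (v j ω)]
  have hIS : Integrable S μ := integrable_finset_sum _ fun j _ => (hIv j).const_mul (y j)
  have hIS2 : Integrable (fun ω => (S ω) ^ 2) μ := by
    refine ((integrable_const (1:ℝ)).add hthird).mono'
      ((hSmeas.pow_const 2).aestronglyMeasurable) ?_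
    filter_upwards with ω
    simp only [Pi.add_apply]
    rw [Real.norm_eq_abs, abs_pow]
    nlinarith [abs_nonneg (S ω), sq_nonneg (|S ω| - 1), sq_nonneg (|S ω|),
      mul_nonneg (mul_nonneg (abs_nonneg (S ω)) (abs_nonneg (S ω))) (abs_nonneg (S ω))]
  have hImul : ∀ i j, Integrable (fun ω => v i ω * v j ω) μ := by
    intro i j
    refine (((hIsq i).add (hIsq j)).div_const 2).mono'
      ((hmeas i).mul (hmeas j)).aestronglyMeasurable ?_
    filter_upwards with ω
    simp only [Pi.add_apply]
    rw [Real.norm_eq_abs, abs_mul]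
    nlinarith [sq_nonneg (|v i ω| - |v j ω|), sq_abs (v i ω), sq_abs (v j ω),
      abs_nonneg (v i ω), abs_nonneg (v j ω)]
  -- mean and second moment of S
  have hES : ∫ ω, S ω ∂μ = 0 := by
    rw [hS, integral_finset_sum _ fun j _ => (hIv j).const_mul (y j)]
    simp only [integral_const_mul]
    simp [hmean]
  have hES2 : ∫ ω, (S ω) ^ 2 ∂μ = 2 * ∑ j, (y j) ^ 2 := by
    have expand : ∀ ω, (S ω) ^ 2 = ∑ i, ∑ j, (y i * y j) * (v i ω * v j ω) := by
      intro ω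
      rw [hS]
      simp only [sq, Finset.sum_mul_sum]
      exact Finset.sum_congr rfl fun i _ => Finset.sum_congr rfl fun j _ => by ring
    have hterm : ∀ i j, Integrable (fun ω => (y i * y j) * (v i ω * v j ω)) μ :=
      fun i j => (hImul i j).const_mul _
    calc ∫ ω, (S ω) ^ 2 ∂μ
        = ∫ ω, ∑ i, ∑ j, (y i * y j) * (v i ω * v j ω) ∂μ := by
          exact integral_congr_ae (Filter.Eventually.of_forall expand)
      _ = ∑ i, ∑ j, (y i * y j) * ∫ ω, v i ω * v j ω ∂μ := by
          rw [integral_finset_sum _ fun i _ => integrable_finset_sum _ fun j _ => hterm i j]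
          refine Finset.sum_congr rfl fun i _ => ?_
          rw [integral_finset_sum _ fun j _ => hterm i j]
          exact Finset.sum_congr rfl fun j _ => integral_const_mul _ _
      _ = ∑ i, (y i) ^ 2 * 2 := by
          refine Finset.sum_congr rfl fun i _ => ?_
          rw [Finset.sum_eq_single i]
          · have hsq : (fun ω => v i ω * v i ω) = fun ω => (v i ω) ^ 2 := by
              funext ω; ring
            rw [hsq, hvar i]; ring
          · intro j _ hji
            have hind : ProbabilityTheory.IndepFun (v i) (v j) μ :=
              hindep.indepFun (Ne.symm hji)
            have : ∫ ω, v i ω * v j ω ∂μ = (∫ ω, v i ω ∂μ) * ∫ ω, v j ω ∂μ :=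
              hind.integral_mul_eq_mul_integral (hIv i).aestronglyMeasurable (hIv j).aestronglyMeasurable
            rw [this, hmean i, hmean j]; ring
          · intro h; exact absurd (Finset.mem_univ i) h
      _ = 2 * ∑ j, (y j) ^ 2 := by rw [Finset.mul_sum]; exact Finset.sum_congr rfl fun j _ => by ring
  set M : ℝ := ∫ ω, |S ω| ^ 3 ∂μ with hM
  have hM0 : 0 ≤ M := integral_nonneg fun ω => by positivity
  set K : ℝ := Lg2 t * ∑ j, (y j) ^ 2 with hK
  -- key estimate
  have key : ∀ θ : ℝ, θ ∈ Set.Ioi (0:ℝ) → |(g θ - Lg t) / θ - K| ≤ Real.sqrt θ * M := by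
    intro θ hθ
    have hθ0 : 0 < θ := hθ
    set r : ℝ := Real.sqrt θ with hr
    have hr0 : 0 < r := Real.sqrt_pos.mpr hθ0
    have hr2 : r ^ 2 = θ := Real.sq_sqrt hθ0.le
    have hILg : Integrable (fun ω => Lg (t + r * S ω)) μ := by
      refine (integrable_const (1:ℝ)).mono'
        ((continuous_Lg.measurable.comp ((measurable_const.add
          (hSmeas.const_mul r)))).aestronglyMeasurable) ?_
      filter_upwards with ω
      rw [Real.norm_eq_abs, abs_of_nonneg (Lg_pos _).le]
      exact (Lg_lt_one _).le
    set R : Ω → ℝ := fun ω =>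
      Lg (t + r * S ω) - Lg t - Lg1 t * (r * S ω) - Lg2 t / 2 * (r * S ω) ^ 2 with hR
    have hIR : Integrable R μ := by
      have h1 : Integrable (fun ω => Lg1 t * (r * S ω)) μ := (hIS.const_mul r).const_mul _
      have h2 : Integrable (fun ω => Lg2 t / 2 * (r * S ω) ^ 2) μ := by
        have : (fun ω => Lg2 t / 2 * (r * S ω) ^ 2)
            = fun ω => (Lg2 t / 2 * r ^ 2) * (S ω) ^ 2 := by funext ω; ring
        rw [this]; exact hIS2.const_mul _
      exact ((hILg.sub (integrable_const _)).sub h1).sub h2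
    have hA : Integrable (fun ω => Lg (t + r * S ω) - Lg t - Lg1 t * (r * S ω)) μ := by
      have h1 : Integrable (fun ω => Lg1 t * (r * S ω)) μ := (hIS.const_mul r).const_mul _
      exact (hILg.sub (integrable_const _)).sub h1
    have hintR : ∫ ω, R ω ∂μ = g θ - Lg t - θ * K := by
      have h1 : Integrable (fun ω => Lg1 t * (r * S ω)) μ := (hIS.const_mul r).const_mul _
      have h2 : Integrable (fun ω => Lg2 t / 2 * (r * S ω) ^ 2) μ := by
        have e : (fun ω => Lg2 t / 2 * (r * S ω) ^ 2)
            = fun ω => (Lg2 t / 2 * r ^ 2) * (S ω) ^ 2 := by funext ω; ring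
        rw [e]; exact hIS2.const_mul _
      have e1 : ∫ ω, Lg1 t * (r * S ω) ∂μ = 0 := by
        have e : (fun ω => Lg1 t * (r * S ω)) = fun ω => (Lg1 t * r) * S ω := by
          funext ω; ring
        rw [e, integral_const_mul, hES, mul_zero]
      have e2 : ∫ ω, Lg2 t / 2 * (r * S ω) ^ 2 ∂μ = θ * K := by
        have e : (fun ω => Lg2 t / 2 * (r * S ω) ^ 2)
            = fun ω => (Lg2 t / 2 * r ^ 2) * (S ω) ^ 2 := by funext ω; ring
        rw [e, integral_const_mul, hES2, hr2, hK]; ring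
      have hgθ : g θ = ∫ ω, Lg (t + r * S ω) ∂μ := hg θ
      calc ∫ ω, R ω ∂μ
          = ∫ ω, (Lg (t + r * S ω) - Lg t - Lg1 t * (r * S ω))
              - Lg2 t / 2 * (r * S ω) ^ 2 ∂μ :=
            integral_congr_ae (Filter.Eventually.of_forall fun ω => by simp only [hR])
        _ = (∫ ω, Lg (t + r * S ω) - Lg t - Lg1 t * (r * S ω) ∂μ)
              - ∫ ω, Lg2 t / 2 * (r * S ω) ^ 2 ∂μ := integral_sub hA h2
        _ = ((∫ ω, Lg (t + r * S ω) - Lg t ∂μ) - ∫ ω, Lg1 t * (r * S ω) ∂μ)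
              - ∫ ω, Lg2 t / 2 * (r * S ω) ^ 2 ∂μ := by
            have h := integral_sub (μ := μ) (f := fun ω => Lg (t + r * S ω) - Lg t)
              (g := fun ω => Lg1 t * (r * S ω)) (hILg.sub (integrable_const _)) h1
            rw [h]
        _ = (((∫ ω, Lg (t + r * S ω) ∂μ) - ∫ _ω, (Lg t : ℝ) ∂μ)
              - ∫ ω, Lg1 t * (r * S ω) ∂μ)
              - ∫ ω, Lg2 t / 2 * (r * S ω) ^ 2 ∂μ := by
            have h := integral_sub (μ := μ) (f := fun ω => Lg (t + r * S ω))
              (g := fun _ω => (Lg t : ℝ)) hILg (integrable_const _)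
            rw [h]
        _ = g θ - Lg t - θ * K := by
            rw [e1, e2, integral_const, ← hgθ]
            simp
    have hRbound : ∀ ω, |R ω| ≤ r ^ 3 * |S ω| ^ 3 := by
      intro ω
      have := taylor2_Lg t (r * S ω)
      rw [hR]
      calc |Lg (t + r * S ω) - Lg t - Lg1 t * (r * S ω) - Lg2 t / 2 * (r * S ω) ^ 2|
          ≤ |r * S ω| ^ 3 := this
        _ = r ^ 3 * |S ω| ^ 3 := by
            rw [abs_mul, mul_pow, abs_of_pos hr0]
    have hintRbound : |∫ ω, R ω ∂μ| ≤ r ^ 3 * M := by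
      calc |∫ ω, R ω ∂μ| ≤ ∫ ω, |R ω| ∂μ := by
            simpa [Real.norm_eq_abs] using norm_integral_le_integral_norm (f := R) (μ := μ)
        _ ≤ ∫ ω, r ^ 3 * |S ω| ^ 3 ∂μ := by
            refine integral_mono hIR.abs (hthird.const_mul _) ?_
            intro ω; exact hRbound ω
        _ = r ^ 3 * M := by rw [integral_const_mul, hM, hS]
    rw [hintR] at hintRbound
    have : (g θ - Lg t) / θ - K = (g θ - Lg t - θ * K) / θ := by
      field_simp
    rw [this, abs_div, abs_of_pos hθ0, div_le_iff₀ hθ0]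
    calc |g θ - Lg t - θ * K| ≤ r ^ 3 * M := hintRbound
      _ = r * M * θ := by rw [← hr2]; ring
  -- conclusion via squeeze
  have hgoalK : Lg t * (1 - Lg t) * (1 - 2 * Lg t) * ∑ j, (y j) ^ 2 = K := by
    rw [hK, Lg2, Lg1]
  rw [hgoalK, ← tendsto_sub_nhds_zero_iff]
  have hsq : Tendsto (fun θ : ℝ => Real.sqrt θ * M) (nhdsWithin 0 (Set.Ioi 0)) (nhds 0) := by
    have : Tendsto (fun θ : ℝ => Real.sqrt θ * M) (nhds 0) (nhds (Real.sqrt 0 * M)) :=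
      (Real.continuous_sqrt.tendsto 0).mul tendsto_const_nhds
    rw [Real.sqrt_zero, zero_mul] at this
    exact this.mono_left nhdsWithin_le_nhds
  refine squeeze_zero_norm' ?_ hsq
  exact eventually_nhdsWithin_of_forall fun θ hθ => by
    rw [Real.norm_eq_abs]; exact key θ hθ
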